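/- arXiv:1607.02896 — 3 statements merged into one kernel-verified Lean document; each statement's English description precedes it below -/
import Mathlib

section
/- Let θ > 0, λ_n = n(θ + n − 1)/2, and consider the death process on the lattice Z_+^K that jumps from m to m − e_i at rate m_i(θ + |m| − 1)/2. Then its transition probability from m to m − i for 0 < i ≤ m factorizes as p_{m, m−i}(t) = C_{|m|, |m|−|i|}(t) · p(i; m, |i|), where C_{|m|,|m|−|i|}(t) is the one-dimensional death process transition probability from |m| to |m|−|i| with rates λ_n, and p(i; m, |i|) is the multivariate hypergeometric pmf. -/
open Finset Real

/-- Death rates `λ_n = n(θ+n-1)/2`. -/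
noncomputable def lam (θ : ℝ) (n : ℕ) : ℝ := n * (θ + n - 1) / 2

/-- The coefficient `C_{n,n-i}(t)` of the one-dimensional death process. -/
noncomputable def deathC (θ : ℝ) (n i : ℕ) (t : ℝ) : ℝ :=
  (∏ h ∈ Finset.range i, lam θ (n - h)) * (-1 : ℝ) ^ i *
    ∑ k ∈ Finset.range (i + 1),
      Real.exp (-(lam θ (n - k)) * t) /
        ∏ h ∈ (Finset.range (i + 1)).erase k, (lam θ (n - k) - lam θ (n - h))

/-- The multivariate hypergeometric pmf `p(i; m, |i|)`. -/
noncomputable def hypPMF {K : ℕ} (m i : Fin K → ℕ) : ℝ :=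
  (∏ j, ((m j).choose (i j) : ℝ)) / ((∑ j, m j).choose (∑ j, i j) : ℝ)

lemma divdiff_zero (x : ℕ → ℝ) : ∀ (n : ℕ) (s : Finset ℕ), s.card = n → 2 ≤ n →
    (∀ a ∈ s, ∀ b ∈ s, a ≠ b → x a ≠ x b) →
    ∑ k ∈ s, ∏ h ∈ s.erase k, (x k - x h)⁻¹ = 0 := by
  intro n
  induction n using Nat.strong_induction_on with
  | _ n ih =>
    intro s hcard hn hinj
    -- pick a, b
    have hne : s.Nonempty := by
      rw [← Finset.card_pos, hcard]; omega
    obtain ⟨a, ha⟩ := hne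
    have hea : (s.erase a).Nonempty := by
      rw [← Finset.card_pos, Finset.card_erase_of_mem ha, hcard]; omega
    obtain ⟨b, hb'⟩ := hea
    have hab : b ≠ a := Finset.ne_of_mem_erase hb'
    have hb : b ∈ s := Finset.mem_of_mem_erase hb'
    set c : ℕ → ℝ := fun k => ∏ h ∈ s.erase k, (x k - x h)⁻¹ with hc
    -- key : for u ∈ s, k ∈ s.erase u : prod over (s.erase u).erase k = c k * (x k - x u)
    have key : ∀ u ∈ s, ∀ k ∈ s.erase u,
        ∏ h ∈ (s.erase u).erase k, (x k - x h)⁻¹ = c k * (x k - x u) := by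
      intro u hu k hk
      have hku : k ≠ u := Finset.ne_of_mem_erase hk
      have hks : k ∈ s := Finset.mem_of_mem_erase hk
      have hxu : x k - x u ≠ 0 := sub_ne_zero.mpr (hinj k hks u hu hku)
      have hcomm : (s.erase u).erase k = (s.erase k).erase u := Finset.erase_right_comm
      have hu' : u ∈ s.erase k := Finset.mem_erase.mpr ⟨Ne.symm hku, hu⟩
      have := Finset.mul_prod_erase (s.erase k) (fun h => (x k - x h)⁻¹) hu'
      rw [hcomm]
      have hck : c k = (x k - x u)⁻¹ * ∏ h ∈ (s.erase k).erase u, (x k - x h)⁻¹ := by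
        rw [hc]; exact this.symm
      rw [hck, mul_comm ((x k - x u)⁻¹) _, mul_assoc, inv_mul_cancel₀ hxu, mul_one]
    have hda : ∑ k ∈ s.erase a, ∏ h ∈ (s.erase a).erase k, (x k - x h)⁻¹
        = ∑ k ∈ s.erase a, c k * (x k - x a) :=
      Finset.sum_congr rfl (fun k hk => key a ha k hk)
    have hdb : ∑ k ∈ s.erase b, ∏ h ∈ (s.erase b).erase k, (x k - x h)⁻¹
        = ∑ k ∈ s.erase b, c k * (x k - x b) :=
      Finset.sum_congr rfl (fun k hk => key b hb k hk)
    have ha' : a ∈ s.erase b := Finset.mem_erase.mpr ⟨fun h => hab h.symm, ha⟩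
    -- split sums
    have split1 : ∑ k ∈ s.erase a, c k * (x k - x a)
        = c b * (x b - x a) + ∑ k ∈ (s.erase a).erase b, c k * (x k - x a) :=
      (Finset.add_sum_erase _ _ hb').symm
    have split2 : ∑ k ∈ s.erase b, c k * (x k - x b)
        = c a * (x a - x b) + ∑ k ∈ (s.erase b).erase a, c k * (x k - x b) :=
      (Finset.add_sum_erase _ _ ha').symm
    have hcomm2 : (s.erase b).erase a = (s.erase a).erase b := Finset.erase_right_comm
    have splitS : ∑ k ∈ s, c k = c a + (c b + ∑ k ∈ (s.erase a).erase b, c k) := by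
      rw [Finset.add_sum_erase _ _ hb', Finset.add_sum_erase _ _ ha]
    have keyid : (x b - x a) * ∑ k ∈ s, c k
        = (∑ k ∈ s.erase a, c k * (x k - x a)) - ∑ k ∈ s.erase b, c k * (x k - x b) := by
      rw [split1, split2, hcomm2, splitS]
      have hsum' : (x b - x a) * ∑ k ∈ (s.erase a).erase b, c k
          = (∑ k ∈ (s.erase a).erase b, c k * (x k - x a))
            - ∑ k ∈ (s.erase a).erase b, c k * (x k - x b) := by
        rw [← Finset.sum_sub_distrib, Finset.mul_sum]
        exact Finset.sum_congr rfl (fun k _ => by ring)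
      have expand : (x b - x a) * (c a + (c b + ∑ k ∈ (s.erase a).erase b, c k))
          = c b * (x b - x a) + ((x b - x a) * ∑ k ∈ (s.erase a).erase b, c k)
            - c a * (x a - x b) := by ring
      rw [expand, hsum']; ring
    have hxba : x b - x a ≠ 0 := sub_ne_zero.mpr (hinj b hb a ha hab)
    rcases eq_or_lt_of_le hn with h2 | h3
    · -- card = 2 : erase sets are singletons
      have hca : (s.erase a).card = 1 := by rw [Finset.card_erase_of_mem ha, hcard, ← h2]
      have hcb : (s.erase b).card = 1 := by rw [Finset.card_erase_of_mem hb, hcard, ← h2]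
      obtain ⟨u, hu⟩ := Finset.card_eq_one.mp hca
      obtain ⟨v, hv⟩ := Finset.card_eq_one.mp hcb
      have e1 : ∑ k ∈ s.erase a, c k * (x k - x a) = ∑ k ∈ s.erase a, ∏ h ∈ (s.erase a).erase k, (x k - x h)⁻¹ := hda.symm
      have e2 : ∑ k ∈ s.erase b, c k * (x k - x b) = ∑ k ∈ s.erase b, ∏ h ∈ (s.erase b).erase k, (x k - x h)⁻¹ := hdb.symm
      have v1 : ∑ k ∈ s.erase a, ∏ h ∈ (s.erase a).erase k, (x k - x h)⁻¹ = 1 := by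
        rw [hu]; simp
      have v2 : ∑ k ∈ s.erase b, ∏ h ∈ (s.erase b).erase k, (x k - x h)⁻¹ = 1 := by
        rw [hv]; simp
      have : (x b - x a) * ∑ k ∈ s, c k = 0 := by rw [keyid, e1, e2, v1, v2]; ring
      exact (mul_eq_zero.mp this).resolve_left hxba
    · -- card ≥ 3 : apply ih to erased sets
      have ihs : ∀ u ∈ s, ∑ k ∈ s.erase u, ∏ h ∈ (s.erase u).erase k, (x k - x h)⁻¹ = 0 := by
        intro u hu
        refine ih (n-1) (by omega) (s.erase u) ?_ (by omega) ?_
        · rw [Finset.card_erase_of_mem hu, hcard]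
        · intro p hp q hq hpq
          exact hinj p (Finset.mem_of_mem_erase hp) q (Finset.mem_of_mem_erase hq) hpq
      have : (x b - x a) * ∑ k ∈ s, c k = 0 := by
        rw [keyid, ← hda, ← hdb, ihs a ha, ihs b hb]; ring
      exact (mul_eq_zero.mp this).resolve_left hxba


lemma lam_lt {θ : ℝ} (hθ : 0 < θ) {a b : ℕ} (h : a < b) : lam θ a < lam θ b := by
  unfold lam
  have ha : (a : ℝ) < (b : ℝ) := by exact_mod_cast h
  have ha0 : (0:ℝ) ≤ a := Nat.cast_nonneg a
  have hb1 : (1:ℝ) ≤ b := by exact_mod_cast Nat.one_le_iff_ne_zero.mpr (by omega)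
  nlinarith

lemma lam_inj {θ : ℝ} (hθ : 0 < θ) {N : ℕ} {k h : ℕ} (hk : k ≤ N) (hh : h ≤ N)
    (hne : k ≠ h) : lam θ (N - k) ≠ lam θ (N - h) := by
  rcases Nat.lt_or_ge k h with hlt | hge
  · exact (lam_lt hθ (by omega)).ne'
  · exact (lam_lt hθ (by omega)).ne

lemma lam_pos {θ : ℝ} (hθ : 0 < θ) {n : ℕ} (hn : 0 < n) : 0 < lam θ n := by
  unfold lam
  have : (1:ℝ) ≤ n := by exact_mod_cast hn
  nlinarith

lemma wprod_ne_zero {θ : ℝ} (hθ : 0 < θ) {N i k : ℕ} (hiN : i ≤ N) (hk : k ∈ Finset.range (i+1)) :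
    (∏ h ∈ (Finset.range (i + 1)).erase k, (lam θ (N - k) - lam θ (N - h))) ≠ 0 := by
  rw [Finset.prod_ne_zero_iff]
  intro h hh
  have hh' : h ∈ Finset.range (i+1) := Finset.mem_of_mem_erase hh
  have hne : k ≠ h := fun e => (Finset.ne_of_mem_erase hh) e.symm
  have h1 := Finset.mem_range.mp hk
  have h2 := Finset.mem_range.mp hh'
  exact sub_ne_zero.mpr (lam_inj hθ (by omega) (by omega) hne)

lemma deathC_zero_eq (θ : ℝ) (N : ℕ) (t : ℝ) : deathC θ N 0 t = Real.exp (-(lam θ N) * t) := by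
  unfold deathC
  simp

lemma deathC_init {θ : ℝ} (hθ : 0 < θ) {N i : ℕ} (hi : 1 ≤ i) (hiN : i ≤ N) :
    deathC θ N i 0 = 0 := by
  unfold deathC
  have : ∑ k ∈ Finset.range (i + 1),
      Real.exp (-(lam θ (N - k)) * 0) /
        ∏ h ∈ (Finset.range (i + 1)).erase k, (lam θ (N - k) - lam θ (N - h)) = 0 := by
    have : ∀ k ∈ Finset.range (i+1), Real.exp (-(lam θ (N - k)) * 0) /
        ∏ h ∈ (Finset.range (i + 1)).erase k, (lam θ (N - k) - lam θ (N - h))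
        = ∏ h ∈ (Finset.range (i + 1)).erase k, (lam θ (N - k) - lam θ (N - h))⁻¹ := by
      intro k _
      rw [mul_zero, Real.exp_zero, one_div, Finset.prod_inv_distrib]
    rw [Finset.sum_congr rfl this]
    refine divdiff_zero (fun k => lam θ (N - k)) (i+1) (Finset.range (i+1)) (by simp) (by omega) ?_
    intro a ha b hb hab
    exact lam_inj hθ (by have := Finset.mem_range.mp ha; omega)
      (by have := Finset.mem_range.mp hb; omega) hab
  rw [this, mul_zero]
lemma hasDerivAt_deathC_aux (θ : ℝ) (N i : ℕ) (t : ℝ) :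
    HasDerivAt (deathC θ N i)
      ((∏ h ∈ Finset.range i, lam θ (N - h)) * (-1:ℝ)^i *
        ∑ k ∈ Finset.range (i+1),
          (-(lam θ (N-k)) * Real.exp (-(lam θ (N-k)) * t)) /
            ∏ h ∈ (Finset.range (i+1)).erase k, (lam θ (N-k) - lam θ (N-h))) t := by
  have : deathC θ N i = fun t => (∏ h ∈ Finset.range i, lam θ (N - h)) * (-1 : ℝ) ^ i *
      ∑ k ∈ Finset.range (i + 1),
        Real.exp (-(lam θ (N - k)) * t) /
          ∏ h ∈ (Finset.range (i + 1)).erase k, (lam θ (N - k) - lam θ (N - h)) := rfl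
  rw [this]
  apply HasDerivAt.const_mul
  apply HasDerivAt.fun_sum
  intro k _
  apply HasDerivAt.div_const
  have h1 : HasDerivAt (fun t : ℝ => -(lam θ (N-k)) * t) (-(lam θ (N-k))) t := by
    simpa using (hasDerivAt_id t).const_mul (-(lam θ (N-k)))
  simpa [mul_comm] using h1.exp

lemma deathC_ode_zero (θ : ℝ) (N : ℕ) (t : ℝ) :
    HasDerivAt (deathC θ N 0) (-(lam θ N) * deathC θ N 0 t) t := by
  have he : deathC θ N 0 = fun t => Real.exp (-(lam θ N) * t) :=
    funext (deathC_zero_eq θ N)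
  rw [he]
  have h1 : HasDerivAt (fun t : ℝ => -(lam θ N) * t) (-(lam θ N)) t := by
    simpa using (hasDerivAt_id t).const_mul (-(lam θ N))
  simpa [mul_comm] using h1.exp

lemma deathC_ode_succ {θ : ℝ} (hθ : 0 < θ) {N i : ℕ} (hiN : i + 1 ≤ N) (t : ℝ) :
    HasDerivAt (deathC θ N (i+1))
      (lam θ (N - i) * deathC θ N i t - lam θ (N - (i+1)) * deathC θ N (i+1) t) t := by
  have h := hasDerivAt_deathC_aux θ N (i+1) t
  set x : ℕ → ℝ := fun k => lam θ (N - k) with hx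
  set E : ℕ → ℝ := fun k => Real.exp (-(x k) * t) with hE
  set w : ℕ → ℕ → ℝ := fun j k => ∏ h ∈ (Finset.range (j+1)).erase k, (x k - x h) with hw
  have hwne : ∀ k ∈ Finset.range (i+2), w (i+1) k ≠ 0 := fun k hk =>
    wprod_ne_zero hθ hiN hk
  have hwne' : ∀ k ∈ Finset.range (i+1), w i k ≠ 0 := fun k hk =>
    wprod_ne_zero hθ (by omega) hk
  have hwsucc : ∀ k ∈ Finset.range (i+1), w (i+1) k = (x k - x (i+1)) * w i k := by
    intro k hk
    have hk' : k ≠ i+1 := by have := Finset.mem_range.mp hk; omega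
    have hni : (i+1) ∉ (Finset.range (i+1)).erase k := by simp
    show (∏ h ∈ (Finset.range (i+2)).erase k, (x k - x h)) = _
    rw [Finset.range_add_one, Finset.erase_insert_of_ne (Ne.symm hk'), Finset.prod_insert hni]
  -- the sum identity
  have hsum : ∑ k ∈ Finset.range (i+2), (-(x k) * E k) / w (i+1) k
      = -(∑ k ∈ Finset.range (i+1), E k / w i k)
        - x (i+1) * ∑ k ∈ Finset.range (i+2), E k / w (i+1) k := by
    have split : ∀ k ∈ Finset.range (i+2), (-(x k) * E k) / w (i+1) k
        = (x (i+1) - x k) * E k / w (i+1) k - x (i+1) * (E k / w (i+1) k) := by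
      intro k _; ring
    rw [Finset.sum_congr rfl split, Finset.sum_sub_distrib, ← Finset.mul_sum]
    congr 1
    rw [Finset.sum_range_succ, sub_self, zero_mul, zero_div, add_zero]
    rw [← Finset.sum_neg_distrib]
    refine Finset.sum_congr rfl ?_
    intro k hk
    have h1 : x k - x (i+1) ≠ 0 := by
      refine sub_ne_zero.mpr (lam_inj hθ ?_ ?_ ?_) <;>
        · first | omega | (have := Finset.mem_range.mp hk; omega)
    rw [hwsucc k hk]
    field_simp [h1, hwne' k hk]
    ring
  rw [hsum] at h
  convert h using 1
  show _ = (∏ h ∈ Finset.range (i+1), x h) * (-1:ℝ)^(i+1) * _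
  have hP : ∏ h ∈ Finset.range (i+1), x h = (∏ h ∈ Finset.range i, x h) * x i :=
    Finset.prod_range_succ x i
  rw [hP]
  show lam θ (N-i) * ((∏ h ∈ Finset.range i, x h) * (-1:ℝ)^i * ∑ k ∈ Finset.range (i+1), E k / w i k)
      - lam θ (N-(i+1)) * ((∏ h ∈ Finset.range (i+1), x h) * (-1:ℝ)^(i+1) * ∑ k ∈ Finset.range (i+2), E k / w (i+1) k) = _
  rw [hP]
  have hxi : x i = lam θ (N - i) := rfl
  have hxi1 : x (i+1) = lam θ (N - (i+1)) := rfl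
  rw [← hxi, ← hxi1]
  ring
lemma ode_unique (c : ℝ) (g : ℝ → ℝ) (hg : ∀ t, HasDerivAt g (-(c * g t)) t)
    (h0 : g 0 = 0) (t : ℝ) : g t = 0 := by
  have hF : ∀ s : ℝ, HasDerivAt (fun u => Real.exp (c * u) * g u) 0 s := by
    intro s
    have h1 : HasDerivAt (fun u : ℝ => Real.exp (c * u)) (Real.exp (c * s) * c) s := by
      have : HasDerivAt (fun u : ℝ => c * u) c s := by
        simpa using (hasDerivAt_id s).const_mul c
      exact this.exp
    have h2 := h1.fun_mul (hg s)
    refine h2.congr_deriv ?_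
    ring
  have hconst := is_const_of_deriv_eq_zero (f := fun u => Real.exp (c * u) * g u)
    (fun s => (hF s).differentiableAt) (fun s => (hF s).deriv)
  have h3 := hconst t 0
  have h4 : Real.exp (c * t) * g t = 0 := by simpa [h0] using h3
  exact (mul_eq_zero.mp h4).resolve_left (Real.exp_ne_zero _)

lemma sum_sub_of_le {K : ℕ} (a b : Fin K → ℕ) (h : b ≤ a) :
    ∑ j, (a j - b j) = ∑ j, a j - ∑ j, b j := by
  have h1 : ∑ j, (b j + (a j - b j)) = ∑ j, a j :=
    Finset.sum_congr rfl (fun j _ => Nat.add_sub_cancel' (h j))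
  rw [Finset.sum_add_distrib] at h1
  omega

lemma hyp_sum {K : ℕ} (m n : Fin K → ℕ) (hnm : n ≤ m) (hlt : ∑ j, n j < ∑ j, m j) :
    ∑ j, (if n j < m j
      then ((n j + 1 : ℕ) : ℝ) * hypPMF m (m - (n + fun k => if k = j then 1 else 0))
      else 0)
    = ((∑ j, n j + 1 : ℕ) : ℝ) * hypPMF m (m - n) := by
  classical
  set N := ∑ j, m j with hN
  set s := ∑ j, n j with hs
  set i : Fin K → ℕ := fun j => m j - n j with hi
  have hsum_i : ∑ j, i j = N - s := sum_sub_of_le m n hnm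
  set P : ℝ := ∏ k, ((m k).choose (i k) : ℝ) with hP
  have hc1 : ((N.choose (N - s - 1)) : ℝ) ≠ 0 := by
    exact_mod_cast (Nat.choose_pos (show N - s - 1 ≤ N by omega)).ne'
  have hc2 : ((N.choose (N - s)) : ℝ) ≠ 0 := by
    exact_mod_cast (Nat.choose_pos (show N - s ≤ N by omega)).ne'
  have hterm : ∀ j : Fin K,
      (if n j < m j
        then ((n j + 1 : ℕ) : ℝ) * hypPMF m (m - (n + fun k => if k = j then 1 else 0))
        else 0)
      = (i j : ℝ) * P / ((N.choose (N - s - 1)) : ℝ) := by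
    intro j
    by_cases hj : n j < m j
    · rw [if_pos hj]
      set ej : Fin K → ℕ := (fun k => if k = j then 1 else 0) with hej
      have happ : ∀ k, (m - (n + ej)) k = if k = j then i j - 1 else i k := by
        intro k
        have hA : (m - (n + ej)) k = m k - (n k + ej k) := rfl
        by_cases hk : k = j
        · subst hk
          have h5 : ej k = 1 := by simp [hej]
          rw [hA, h5, if_pos rfl]
          simp only [hi]
          omega
        · have h5 : ej k = 0 := by simp [hej, hk]
          rw [hA, h5, if_neg hk]
          simp only [hi]
          omega
      have hle : n + ej ≤ m := by
        intro k
        show n k + ej k ≤ m k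
        have hmn : n k ≤ m k := hnm k
        by_cases hk : k = j
        · subst hk
          have h5 : ej k = 1 := by simp [hej]
          rw [h5]; omega
        · have h5 : ej k = 0 := by simp [hej, hk]
          rw [h5]; omega
      have hsum2 : ∑ k, (m - (n + ej)) k = N - s - 1 := by
        show ∑ k, (m k - (n + ej) k) = N - s - 1
        rw [sum_sub_of_le m (n + ej) hle]
        have he1 : ∑ k, (n + ej) k = s + 1 := by
          have : ∀ k, (n + ej) k = n k + ej k := fun k => rfl
          rw [Finset.sum_congr rfl (fun k _ => this k), Finset.sum_add_distrib]
          have : ∑ k, ej k = 1 := by simp [hej]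
          rw [this]
        rw [he1, ← hN]
        omega
      unfold hypPMF
      rw [hsum2]
      set Q : ℝ := ∏ k ∈ Finset.univ.erase j, ((m k).choose (i k) : ℝ) with hQ
      have hprod : ∏ k, (((m k).choose ((m - (n + ej)) k)) : ℝ)
          = ((m j).choose (i j - 1) : ℝ) * Q := by
        rw [← Finset.mul_prod_erase Finset.univ _ (Finset.mem_univ j)]
        congr 1
        · rw [happ j, if_pos rfl]
        · refine Finset.prod_congr rfl ?_
          intro k hk
          rw [happ k, if_neg (Finset.ne_of_mem_erase hk)]
      rw [hprod]
      have hPsplit : P = ((m j).choose (i j) : ℝ) * Q :=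
        (Finset.mul_prod_erase Finset.univ _ (Finset.mem_univ j)).symm
      have hchoose : (n j + 1) * (m j).choose (i j - 1) = i j * (m j).choose (i j) := by
        have h1 := Nat.choose_succ_right_eq (m j) (i j - 1)
        have h2 : i j - 1 + 1 = i j := by simp only [hi]; omega
        rw [h2] at h1
        have h3 : m j - (i j - 1) = n j + 1 := by simp only [hi]; omega
        rw [h3] at h1
        rw [mul_comm (n j + 1) ((m j).choose (i j - 1)), ← h1]
        exact mul_comm _ _
      have hchooseR : ((n j + 1 : ℕ) : ℝ) * ((m j).choose (i j - 1) : ℝ)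
          = (i j : ℝ) * ((m j).choose (i j) : ℝ) := by
        exact_mod_cast congrArg (Nat.cast : ℕ → ℝ) hchoose
      have key2 : ((n j + 1 : ℕ) : ℝ) * (((m j).choose (i j - 1) : ℝ) * Q)
          = (i j : ℝ) * P := by
        rw [hPsplit]
        linear_combination Q * hchooseR
      rw [← mul_div_assoc, key2]
    · rw [if_neg hj]
      have h0 : i j = 0 := by simp only [hi]; omega
      rw [h0]
      simp
  rw [Finset.sum_congr rfl (fun j _ => hterm j)]
  rw [← Finset.sum_div, ← Finset.sum_mul]
  have hsumiR : ∑ j, (i j : ℝ) = ((N - s : ℕ) : ℝ) := by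
    rw [← hsum_i]; push_cast; rfl
  rw [hsumiR]
  unfold hypPMF
  have h2 : ∑ k, (m - n) k = N - s := hsum_i
  have h3 : ∏ k, (((m k).choose ((m - n) k)) : ℝ) = P := rfl
  rw [h2, h3]
  have hkey : (N - s) * N.choose (N - s) = (s + 1) * N.choose (N - s - 1) := by
    have h1 := Nat.choose_succ_right_eq N (N - s - 1)
    have h2' : N - s - 1 + 1 = N - s := by omega
    rw [h2'] at h1
    have h3' : N - (N - s - 1) = s + 1 := by omega
    rw [h3'] at h1
    rw [mul_comm (N - s) (N.choose (N - s)), h1]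
    exact mul_comm _ _
  have hkeyR : ((N - s : ℕ) : ℝ) * ((N.choose (N - s)) : ℝ)
      = ((s + 1 : ℕ) : ℝ) * ((N.choose (N - s - 1)) : ℝ) := by
    exact_mod_cast congrArg (Nat.cast : ℕ → ℝ) hkey
  rw [← hN, ← mul_div_assoc, div_eq_div_iff hc1 hc2]
  push_cast at hkeyR ⊢
  linear_combination P * hkeyR

/-- the transition probabilities of the death process on `ℤ₊^K`
jumping from `n` to `n - e_i` at rate `n_i(θ+|n|-1)/2`, characterized as the
solution of the Kolmogorov forward equations started at `m`, factorize as the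
one-dimensional death coefficient times the multivariate hypergeometric pmf. -/
theorem multidim_death_process_transition (θ : ℝ) (hθ : 0 < θ) {K : ℕ}
    (m : Fin K → ℕ) (q : (Fin K → ℕ) → ℝ → ℝ)
    (hinit : ∀ n, q n 0 = if n = m then 1 else 0)
    (hsupp : ∀ n, ¬ n ≤ m → ∀ t, q n t = 0)
    (hode : ∀ n t, HasDerivAt (q n)
      ((∑ j, ((n j + 1 : ℕ) : ℝ) * (θ + (∑ k, n k) + 1 - 1) / 2
          * q (n + fun k => if k = j then 1 else 0) t)
        - ((∑ k, n k : ℕ) : ℝ) * (θ + (∑ k, n k) - 1) / 2 * q n t) t) :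
    ∀ i : Fin K → ℕ, 0 < i → i ≤ m → ∀ t, 0 ≤ t →
      q (m - i) t = deathC θ (∑ j, m j) (∑ j, i j) t * hypPMF m i := by
  classical
  set N := ∑ j, m j with hN
  have key : ∀ d : ℕ, ∀ n : Fin K → ℕ, n ≤ m → N - ∑ j, n j = d → ∀ t : ℝ,
      q n t = deathC θ N (N - ∑ j, n j) t * hypPMF m (m - n) := by
    intro d
    induction d using Nat.strong_induction_on with
    | _ d ih =>
      intro n hnm hd t
      have hsle : ∑ j, n j ≤ N := by
        rw [hN]; exact Finset.sum_le_sum (fun j _ => hnm j)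
      by_cases hcase : n = m
      · -- top state
        subst hcase
        have hss : ∑ j, n j = N := hN.symm ▸ rfl
        have hzero : N - ∑ j, n j = 0 := by omega
        rw [hzero]
        have hsub : n - n = (0 : Fin K → ℕ) := by
          funext j; exact Nat.sub_self (n j)
        have hyp1 : hypPMF n (n - n) = 1 := by
          rw [hsub]
          unfold hypPMF
          simp
        rw [hyp1, mul_one]
        -- q n satisfies y' = -lam N y, y 0 = 1 ; deathC θ N 0 same
        set g : ℝ → ℝ := fun u => q n u - deathC θ N 0 u with hg
        have hgd : ∀ u, HasDerivAt g (-(lam θ N * g u)) u := by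
          intro u
          have hq' : HasDerivAt (q n) (-(lam θ N * q n u)) u := by
            have h := hode n u
            have hz : ∀ j : Fin K,
                ((n j + 1 : ℕ) : ℝ) * (θ + (∑ k, n k) + 1 - 1) / 2
                  * q (n + fun k => if k = j then 1 else 0) u = 0 := by
              intro j
              have hns : ¬ (n + fun k => if k = j then 1 else 0) ≤ n := by
                intro hc
                have := hc j
                simp [Pi.add_apply] at this
              rw [hsupp _ hns u, mul_zero]
            rw [Finset.sum_congr rfl (fun j _ => hz j), Finset.sum_const_zero] at h
            have heq : (0 : ℝ) - ((∑ k, n k : ℕ) : ℝ) * (θ + (∑ k, n k) - 1) / 2 * q n u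
                = -(lam θ N * q n u) := by
              rw [hss]
              unfold lam
              ring
            rw [heq] at h
            exact h
          have hr' := deathC_ode_zero θ N u
          have := hq'.fun_sub hr'
          refine this.congr_deriv ?_
          rw [hg]
          ring
        have hg0 : g 0 = 0 := by
          rw [hg]
          simp only []
          rw [hinit n, if_pos rfl, deathC_zero_eq]
          simp
        have := ode_unique (lam θ N) g hgd hg0 t
        rw [hg] at this
        simp only [] at this
        linarith [this]
      · -- interior state
        have hslt : ∑ j, n j < N := by
          rcases Nat.lt_or_ge (∑ j, n j) N with h | h
          · exact h
          · exfalso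
            apply hcase
            have hEq : ∑ j, n j = N := by omega
            funext j
            by_contra hne
            have hlt : n j < m j := lt_of_le_of_ne (hnm j) hne
            have : ∑ j, n j < ∑ j, m j :=
              Finset.sum_lt_sum (fun k _ => hnm k) ⟨j, Finset.mem_univ j, hlt⟩
            omega
        set s := ∑ j, n j with hs
        have hrep : N - s = (N - s - 1) + 1 := by omega
        set F : ℝ → ℝ := fun u =>
          lam θ (s + 1) * (deathC θ N (N - s - 1) u * hypPMF m (m - n)) with hF
        -- derivative of q n
        have hq' : ∀ u, HasDerivAt (q n) (F u - lam θ s * q n u) u := by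
          intro u
          have h := hode n u
          have hterm : ∀ j : Fin K,
              ((n j + 1 : ℕ) : ℝ) * (θ + (∑ k, n k) + 1 - 1) / 2
                * q (n + fun k => if k = j then 1 else 0) u
              = (θ + (s : ℝ)) / 2 * deathC θ N (N - s - 1) u *
                (if n j < m j
                  then ((n j + 1 : ℕ) : ℝ) * hypPMF m (m - (n + fun k => if k = j then 1 else 0))
                  else 0) := by
            intro j
            by_cases hj : n j < m j
            · rw [if_pos hj]
              have hle : (n + fun k => if k = j then 1 else 0) ≤ m := by
                intro k
                show n k + (if k = j then 1 else 0) ≤ m k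
                have hmn : n k ≤ m k := hnm k
                by_cases hk : k = j
                · subst hk; rw [if_pos rfl]; omega
                · rw [if_neg hk]; omega
              have hsum1 : ∑ k, ((n + fun k' => if k' = j then 1 else 0) : Fin K → ℕ) k
                  = s + 1 := by
                show ∑ k, (n k + (if k = j then 1 else 0)) = s + 1
                rw [Finset.sum_add_distrib]
                simp [hs]
              have hihval := ih (N - s - 1) (by omega)
                (n + fun k => if k = j then 1 else 0) hle (by rw [hsum1]; omega) u
              rw [hsum1] at hihval
              have : N - (s + 1) = N - s - 1 := by omega
              rw [this] at hihval
              rw [hihval]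
              ring
            · rw [if_neg hj]
              have hns : ¬ (n + fun k => if k = j then 1 else 0) ≤ m := by
                intro hc
                have := hc j
                simp [Pi.add_apply] at this
                omega
              rw [hsupp _ hns u]
              ring
          rw [Finset.sum_congr rfl (fun j _ => hterm j), ← Finset.mul_sum] at h
          rw [hyp_sum m n hnm (by rw [← hN]; exact hslt)] at h
          have heq : (θ + (s : ℝ)) / 2 * deathC θ N (N - s - 1) u *
                (((∑ j, n j + 1 : ℕ) : ℝ) * hypPMF m (m - n))
              - ((∑ k, n k : ℕ) : ℝ) * (θ + (∑ k, n k) - 1) / 2 * q n u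
              = F u - lam θ s * q n u := by
            rw [hF]
            show (θ + (s : ℝ)) / 2 * deathC θ N (N - s - 1) u *
                (((s + 1 : ℕ) : ℝ) * hypPMF m (m - n))
              - ((s : ℕ) : ℝ) * (θ + ((s : ℕ) : ℝ) - 1) / 2 * q n u
              = lam θ (s + 1) * (deathC θ N (N - s - 1) u * hypPMF m (m - n))
                - lam θ s * q n u
            unfold lam
            push_cast
            ring
          rw [heq] at h
          exact h
        -- derivative of the candidate
        set R : ℝ → ℝ := fun u => deathC θ N (N - s) u * hypPMF m (m - n) with hR
        have hr' : ∀ u, HasDerivAt R (F u - lam θ s * R u) u := by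
          intro u
          have h := (deathC_ode_succ hθ (N := N) (i := N - s - 1) (by omega) u).mul_const
            (hypPMF m (m - n))
          have h1 : N - (N - s - 1) = s + 1 := by omega
          have h2 : N - (N - s - 1 + 1) = s := by omega
          rw [h1, h2, ← hrep] at h
          have heq : (lam θ (s+1) * deathC θ N (N - s - 1) u
                - lam θ s * deathC θ N (N - s) u) * hypPMF m (m - n)
              = F u - lam θ s * R u := by
            rw [hF, hR]
            ring
          rw [heq] at h
          exact h
        -- uniqueness
        set g : ℝ → ℝ := fun u => q n u - R u with hg
        have hgd : ∀ u, HasDerivAt g (-(lam θ s * g u)) u := by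
          intro u
          have := (hq' u).fun_sub (hr' u)
          refine this.congr_deriv ?_
          rw [hg]
          ring
        have hg0 : g 0 = 0 := by
          rw [hg]
          simp only []
          rw [hinit n, if_neg hcase, hR]
          simp only []
          rw [deathC_init hθ (by omega) (by omega)]
          ring
        have hfin := ode_unique (lam θ s) g hgd hg0 t
        rw [hg] at hfin
        simp only [] at hfin
        have : q n t = R t := by linarith
        rw [this, hR]
  intro i hi0 him t ht
  have h1 : m - i ≤ m := fun j => Nat.sub_le _ _
  have hisum : ∑ j, i j ≤ N := by
    rw [hN]; exact Finset.sum_le_sum (fun j _ => him j)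
  have hsub : ∑ j, (m - i) j = N - ∑ j, i j := by
    show ∑ j, (m j - i j) = N - ∑ j, i j
    rw [sum_sub_of_le m i him, ← hN]
  have hkey := key (N - ∑ j, (m - i) j) (m - i) h1 rfl t
  rw [hsub] at hkey
  have h2 : N - (N - ∑ j, i j) = ∑ j, i j := Nat.sub_sub_self hisum
  rw [h2] at hkey
  have h3 : m - (m - i) = i := by
    funext j
    have hmj : i j ≤ m j := him j
    show m j - (m j - i j) = i j
    omega
  rw [h3] at hkey
  exact hkey
end

section
/- Let K ≥ 2, α = (α_1,...,α_K) with α_i > 0, θ = Σ α_i, and let L_WF be the Wright–Fisher generator on the simplex Δ_K: (L_WF f)(x) = (1/2) Σ_{i,j} x_i(δ_{ij} − x_j) ∂²f/∂x_i∂x_j + (1/2) Σ_i (α_i − θ x_i) ∂f/∂x_i. Define h(x, m) = (Γ(θ+|m|)/Γ(θ)) ∏_i (Γ(α_i)/Γ(α_i+m_i)) x^m for m ∈ Z_+^K. Then (L_WF h(·, m))(x) = ((θ+|m|−1)/2) Σ_{i=1}^K m_i h(x, m−e_i) − (|m|(θ+|m|−1)/2) h(x, m) for all x in the interior of the simplex.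 -/
open Finset Real

/-- The Wright–Fisher duality function
`h(x,m) = (Γ(θ+|m|)/Γ(θ)) ∏_i (Γ(α_i)/Γ(α_i+m_i)) x^m`, with `θ = Σ α_i`. -/
noncomputable def hWF {K : ℕ} (α : Fin K → ℝ) (x : Fin K → ℝ) (m : Fin K → ℕ) : ℝ :=
  (Real.Gamma ((∑ i, α i) + ∑ i, (m i : ℝ)) / Real.Gamma (∑ i, α i)) *
    (∏ i, Real.Gamma (α i) / Real.Gamma (α i + m i)) * ∏ i, x i ^ m i

/-- First partial derivative in the `i`-th coordinate. -/
noncomputable def pd {K : ℕ} (f : (Fin K → ℝ) → ℝ) (i : Fin K) (x : Fin K → ℝ) : ℝ :=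
  deriv (fun s => f (Function.update x i s)) (x i)

noncomputable def Pm {K : ℕ} (m : Fin K → ℕ) (x : Fin K → ℝ) : ℝ := ∏ i, x i ^ m i

def eV {K : ℕ} (i : Fin K) : Fin K → ℕ := fun k => if k = i then 1 else 0

lemma eV_self {K : ℕ} (i : Fin K) : eV i i = 1 := by simp [eV]

lemma eV_ne {K : ℕ} {i k : Fin K} (h : k ≠ i) : eV i k = 0 := by simp [eV, h]

lemma sub_eV_apply {K : ℕ} (m : Fin K → ℕ) (i k : Fin K) :
    (m - eV i) k = m k - (if k = i then 1 else 0) := rfl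

lemma Pm_split {K : ℕ} (m : Fin K → ℕ) (x : Fin K → ℝ) (i : Fin K) :
    Pm m x = x i ^ m i * ∏ k ∈ univ.erase i, x k ^ m k := by
  rw [Pm, ← Finset.mul_prod_erase univ _ (Finset.mem_univ i)]

lemma Pm_sub_eV {K : ℕ} (m : Fin K → ℕ) (x : Fin K → ℝ) (i : Fin K) :
    Pm (m - eV i) x = x i ^ (m i - 1) * ∏ k ∈ univ.erase i, x k ^ m k := by
  rw [Pm_split (m - eV i) x i]
  congr 1
  · simp [sub_eV_apply, eV]
  · refine Finset.prod_congr rfl fun k hk => ?_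
    rw [show (m - eV i) k = m k from by
      simp [sub_eV_apply, eV, (Finset.mem_erase.mp hk).1]]

lemma pd_monomial {K : ℕ} (c : ℝ) (m : Fin K → ℕ) (i : Fin K) (x : Fin K → ℝ) :
    pd (fun y => c * Pm m y) i x = c * (m i : ℝ) * Pm (m - eV i) x := by
  have h1 : (fun s => c * Pm m (Function.update x i s))
      = fun s => (c * ∏ k ∈ univ.erase i, x k ^ m k) * s ^ m i := by
    funext s
    rw [Pm_split m _ i, Function.update_self]
    rw [show (∏ k ∈ univ.erase i, (Function.update x i s k) ^ m k)
        = ∏ k ∈ univ.erase i, x k ^ m k from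
      Finset.prod_congr rfl fun k hk =>
        by rw [Function.update_of_ne (Finset.mem_erase.mp hk).1]]
    ring
  rw [pd, h1, deriv_const_mul_field, deriv_pow_field, Pm_sub_eV]
  ring

lemma xP {K : ℕ} (n : Fin K → ℕ) (i : Fin K) (x : Fin K → ℝ) (h : n i ≠ 0) :
    x i * Pm (n - eV i) x = Pm n x := by
  have hx : x i * x i ^ (n i - 1) = x i ^ n i := by
    rw [← pow_succ']
    congr 1
    omega
  rw [Pm_sub_eV, Pm_split n x i, ← mul_assoc, hx]

lemma coeff_xP {K : ℕ} (n : Fin K → ℕ) (i : Fin K) (x : Fin K → ℝ) :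
    (n i : ℝ) * (x i * Pm (n - eV i) x) = (n i : ℝ) * Pm n x := by
  rcases Nat.eq_zero_or_pos (n i) with h | h
  · simp [h]
  · rw [xP n i x (Nat.pos_iff_ne_zero.mp h)]

lemma sum_sub_eV {K : ℕ} (m : Fin K → ℕ) (i : Fin K) (h : 1 ≤ m i) :
    ∑ j, ((m - eV i) j : ℝ) = (∑ j, (m j : ℝ)) - 1 := by
  have key : ∀ j : Fin K, ((m - eV i) j : ℝ) = (m j : ℝ) - (if j = i then 1 else 0) := by
    intro j
    rw [sub_eV_apply]
    by_cases hj : j = i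
    · subst hj
      rw [if_pos rfl, if_pos rfl, Nat.cast_sub h, Nat.cast_one]
    · simp [hj]
  rw [Finset.sum_congr rfl fun j _ => key j, Finset.sum_sub_distrib]
  simp

lemma cast_sub_eV_self {K : ℕ} (m : Fin K → ℕ) (i : Fin K) (h : 1 ≤ m i) :
    ((m - eV i) i : ℝ) = (m i : ℝ) - 1 := by
  rw [show (m - eV i) i = m i - 1 from by rw [Pi.sub_apply, eV_self], Nat.cast_sub h, Nat.cast_one]

lemma core {K : ℕ} (α : Fin K → ℝ) (m : Fin K → ℕ) (x : Fin K → ℝ) :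
    ∑ i, ∑ j, x i * ((if i = j then 1 else 0) - x j)
        * ((m i : ℝ) * ((m - eV i) j : ℝ) * Pm (m - eV i - eV j) x)
      + ∑ i, (α i - (∑ k, α k) * x i) * ((m i : ℝ) * Pm (m - eV i) x)
    = ∑ i, (m i : ℝ) * (α i + (m i : ℝ) - 1) * Pm (m - eV i) x
      - (∑ k, (m k : ℝ)) * ((∑ k, α k) + (∑ k, (m k : ℝ)) - 1) * Pm m x := by
  have inner : ∀ i : Fin K,
      ∑ j, x i * ((if i = j then 1 else 0) - x j)
        * ((m i : ℝ) * ((m - eV i) j : ℝ) * Pm (m - eV i - eV j) x)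
      = (m i : ℝ) * ((m i : ℝ) - 1) * Pm (m - eV i) x
        - (m i : ℝ) * (((∑ k, (m k : ℝ)) - 1) * Pm m x) := by
    intro i
    rcases Nat.eq_zero_or_pos (m i) with h0 | h0
    · simp [h0]
    · have hterm : ∀ j : Fin K,
          x i * ((if i = j then 1 else 0) - x j)
            * ((m i : ℝ) * ((m - eV i) j : ℝ) * Pm (m - eV i - eV j) x)
          = (if i = j then
              x i * ((m i : ℝ) * ((m - eV i) j : ℝ) * Pm (m - eV i - eV j) x) else 0)
            - (m i : ℝ) * x i * (((m - eV i) j : ℝ) * (x j * Pm (m - eV i - eV j) x)) := by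
        intro j
        by_cases h : i = j
        · rw [if_pos h, if_pos h]; ring
        · rw [if_neg h, if_neg h]; ring
      rw [Finset.sum_congr rfl fun j _ => hterm j, Finset.sum_sub_distrib,
        Finset.sum_ite_eq, if_pos (Finset.mem_univ i), ← Finset.mul_sum]
      have h3 : ∑ j, (((m - eV i) j : ℝ) * (x j * Pm (m - eV i - eV j) x))
          = ((∑ k, (m k : ℝ)) - 1) * Pm (m - eV i) x := by
        rw [Finset.sum_congr rfl fun j _ => coeff_xP (m - eV i) j x, ← Finset.sum_mul,
          sum_sub_eV m i h0]
      rw [h3]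
      have A := coeff_xP (m - eV i) i x
      have C := xP m i x (Nat.pos_iff_ne_zero.mp h0)
      have D := cast_sub_eV_self m i h0
      linear_combination (m i : ℝ) * A - (m i : ℝ) * ((∑ k, (m k : ℝ)) - 1) * C
        + (m i : ℝ) * Pm (m - eV i) x * D
  have drift : ∀ i : Fin K,
      (α i - (∑ k, α k) * x i) * ((m i : ℝ) * Pm (m - eV i) x)
      = α i * (m i : ℝ) * Pm (m - eV i) x - (m i : ℝ) * ((∑ k, α k) * Pm m x) := by
    intro i
    linear_combination (-(∑ k, α k)) * coeff_xP m i x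
  rw [Finset.sum_congr rfl fun i _ => inner i, Finset.sum_congr rfl fun i _ => drift i,
    Finset.sum_sub_distrib, Finset.sum_sub_distrib, ← Finset.sum_mul, ← Finset.sum_mul]
  have hAB : ∑ i, (m i : ℝ) * ((m i : ℝ) - 1) * Pm (m - eV i) x
      + ∑ i, α i * (m i : ℝ) * Pm (m - eV i) x
      = ∑ i, (m i : ℝ) * (α i + (m i : ℝ) - 1) * Pm (m - eV i) x := by
    rw [← Finset.sum_add_distrib]
    exact Finset.sum_congr rfl fun i _ => by ring
  linear_combination hAB

noncomputable def Cst {K : ℕ} (α : Fin K → ℝ) (m : Fin K → ℕ) : ℝ :=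
  (Real.Gamma ((∑ i, α i) + ∑ i, (m i : ℝ)) / Real.Gamma (∑ i, α i)) *
    ∏ i, Real.Gamma (α i) / Real.Gamma (α i + m i)

lemma hWF_eq {K : ℕ} (α x : Fin K → ℝ) (m : Fin K → ℕ) :
    hWF α x m = Cst α m * Pm m x := rfl

set_option maxHeartbeats 2000000 in
lemma Cst_rec {K : ℕ} (α : Fin K → ℝ) (hα : ∀ i, 0 < α i) (hθ : 0 < ∑ k, α k)
    (m : Fin K → ℕ) (i : Fin K) (h : 1 ≤ m i) :
    ((∑ k, α k) + (∑ k, (m k : ℝ)) - 1) * Cst α (m - eV i)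
      = (α i + (m i : ℝ) - 1) * Cst α m := by
  have hS1 : (1:ℝ) ≤ ∑ k, (m k : ℝ) := by
    have h1 : (1:ℝ) ≤ (m i : ℝ) := by exact_mod_cast h
    have h2 : (m i : ℝ) ≤ ∑ k, (m k : ℝ) :=
      Finset.single_le_sum (f := fun k => (m k : ℝ)) (fun k _ => by positivity)
        (Finset.mem_univ i)
    linarith
  have hGθ : Real.Gamma (∑ k, α k) ≠ 0 := (Real.Gamma_pos_of_pos hθ).ne'
  have hpos1 : 0 < (∑ k, α k) + (∑ k, (m k : ℝ)) - 1 := by linarith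
  have hpos2 : 0 < α i + (m i : ℝ) - 1 := by
    have h1 : (1:ℝ) ≤ (m i : ℝ) := by exact_mod_cast h
    have := hα i; linarith
  have g1 : Real.Gamma ((∑ k, α k) + ∑ k, (m k : ℝ))
      = ((∑ k, α k) + (∑ k, (m k : ℝ)) - 1)
        * Real.Gamma ((∑ k, α k) + (∑ k, (m k : ℝ)) - 1) := by
    have h' := Real.Gamma_add_one hpos1.ne'
    rw [show ((∑ k, α k) + (∑ k, (m k : ℝ)) - 1) + 1
        = (∑ k, α k) + ∑ k, (m k : ℝ) from by ring] at h'
    exact h'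
  have g2 : Real.Gamma (α i + (m i : ℝ))
      = (α i + (m i : ℝ) - 1) * Real.Gamma (α i + (m i : ℝ) - 1) := by
    have h' := Real.Gamma_add_one hpos2.ne'
    rw [show (α i + (m i : ℝ) - 1) + 1 = α i + (m i : ℝ) from by ring] at h'
    exact h'
  have e1 : ∑ k, (((m - eV i) k : ℕ) : ℝ) = (∑ k, (m k : ℝ)) - 1 := sum_sub_eV m i h
  have p1 : (∏ k, Real.Gamma (α k) / Real.Gamma (α k + ((m - eV i) k : ℝ)))
      = (Real.Gamma (α i) / Real.Gamma (α i + (m i : ℝ) - 1))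
        * ∏ k ∈ univ.erase i, Real.Gamma (α k) / Real.Gamma (α k + (m k : ℝ)) := by
    rw [← Finset.mul_prod_erase univ _ (Finset.mem_univ i)]
    congr 1
    · rw [cast_sub_eV_self m i h]
      ring_nf
    · refine Finset.prod_congr rfl fun k hk => ?_
      rw [show (m - eV i) k = m k from by
        rw [Pi.sub_apply, eV_ne (Finset.mem_erase.mp hk).1, Nat.sub_zero]]
  have p2 : (∏ k, Real.Gamma (α k) / Real.Gamma (α k + (m k : ℝ)))
      = (Real.Gamma (α i) / Real.Gamma (α i + (m i : ℝ)))
        * ∏ k ∈ univ.erase i, Real.Gamma (α k) / Real.Gamma (α k + (m k : ℝ)) :=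
    (Finset.mul_prod_erase univ _ (Finset.mem_univ i)).symm
  simp only [Cst]
  rw [e1, p1, p2, show (∑ k, α k) + ((∑ k, (m k : ℝ)) - 1)
      = (∑ k, α k) + (∑ k, (m k : ℝ)) - 1 from by ring, g1, g2]
  have habs : ∀ (T a G1 Gθ Ga Gb R : ℝ), a ≠ 0 →
      T * (G1 / Gθ * (Ga / Gb * R)) = a * (T * G1 / Gθ * (Ga / (a * Gb) * R)) := by
    intro T a G1 Gθ Ga Gb R ha
    rw [div_mul_eq_div_div_swap]
    have h1 : a * a⁻¹ = 1 := mul_inv_cancel₀ ha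
    linear_combination (-(T * G1 / Gθ * (Ga / Gb * R))) * h1
  exact habs _ _ _ _ _ _ _ hpos2.ne'

/-- the Wright–Fisher generator applied to `h(·,m)` satisfies the
death-process duality identity on the interior of the simplex. -/
theorem WF_generator_duality {K : ℕ} (hK : 2 ≤ K) (α : Fin K → ℝ)
    (hα : ∀ i, 0 < α i) (m : Fin K → ℕ) (x : Fin K → ℝ)
    (hx : ∀ i, 0 < x i) (hsum : ∑ i, x i = 1) :
    (1 / 2) * ∑ i, ∑ j, x i * ((if i = j then 1 else 0) - x j)
        * pd (pd (hWF α · m) i) j x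
      + (1 / 2) * ∑ i, (α i - (∑ k, α k) * x i) * pd (hWF α · m) i x
    = (((∑ k, α k) + (∑ k, (m k : ℝ)) - 1) / 2) *
        ∑ i, (m i : ℝ) * hWF α x (m - fun k => if k = i then 1 else 0)
      - ((∑ k, (m k : ℝ)) * ((∑ k, α k) + (∑ k, (m k : ℝ)) - 1) / 2) * hWF α x m := by
  have : Nonempty (Fin K) := ⟨⟨0, by omega⟩⟩
  have hθ : 0 < ∑ k, α k := Finset.sum_pos (fun i _ => hα i) Finset.univ_nonempty
  have hfun : (hWF α · m) = fun y => Cst α m * Pm m y := rfl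
  have hf1 : ∀ (i : Fin K) (y : Fin K → ℝ),
      pd (hWF α · m) i y = Cst α m * (m i : ℝ) * Pm (m - eV i) y := by
    intro i y
    rw [hfun]
    exact pd_monomial _ m i y
  have hfi : ∀ i : Fin K,
      pd (hWF α · m) i = fun y => Cst α m * (m i : ℝ) * Pm (m - eV i) y :=
    fun i => funext (hf1 i)
  have hf2 : ∀ i j : Fin K,
      pd (pd (hWF α · m) i) j x
        = Cst α m * (m i : ℝ) * ((m - eV i) j : ℝ) * Pm (m - eV i - eV j) x := by
    intro i j
    rw [hfi i]
    exact pd_monomial _ (m - eV i) j x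
  have hR : ∀ i : Fin K,
      ((∑ k, α k) + (∑ k, (m k : ℝ)) - 1) * ((m i : ℝ) * hWF α x (m - eV i))
        = Cst α m * ((m i : ℝ) * (α i + (m i : ℝ) - 1) * Pm (m - eV i) x) := by
    intro i
    rcases Nat.eq_zero_or_pos (m i) with h0 | h0
    · simp [h0]
    · rw [hWF_eq]
      have hc := Cst_rec α hα hθ m i h0
      linear_combination (m i : ℝ) * Pm (m - eV i) x * hc
  have hev : ∀ i : Fin K, (m - fun k => if k = i then 1 else 0) = m - eV i :=
    fun i => rfl
  simp only [hev]
  have hLHS1 : ∑ i, ∑ j, x i * ((if i = j then 1 else 0) - x j)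
        * pd (pd (hWF α · m) i) j x
      = Cst α m * ∑ i, ∑ j, x i * ((if i = j then 1 else 0) - x j)
          * ((m i : ℝ) * ((m - eV i) j : ℝ) * Pm (m - eV i - eV j) x) := by
    rw [Finset.mul_sum]
    refine Finset.sum_congr rfl fun i _ => ?_
    rw [Finset.mul_sum]
    refine Finset.sum_congr rfl fun j _ => ?_
    rw [hf2 i j]; ring
  have hLHS2 : ∑ i, (α i - (∑ k, α k) * x i) * pd (hWF α · m) i x
      = Cst α m * ∑ i, (α i - (∑ k, α k) * x i) * ((m i : ℝ) * Pm (m - eV i) x) := by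
    rw [Finset.mul_sum]
    refine Finset.sum_congr rfl fun i _ => ?_
    rw [hf1 i x]; ring
  have hRHS1 : ((∑ k, α k) + (∑ k, (m k : ℝ)) - 1) * ∑ i, (m i : ℝ) * hWF α x (m - eV i)
      = Cst α m * ∑ i, (m i : ℝ) * (α i + (m i : ℝ) - 1) * Pm (m - eV i) x := by
    rw [Finset.mul_sum, Finset.mul_sum]
    exact Finset.sum_congr rfl fun i _ => hR i
  rw [hWF_eq]
  have hcore := core α m x
  linear_combination (1 / 2) * hLHS1 + (1 / 2) * hLHS2 + (Cst α m / 2) * hcore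
    - (1 / 2) * hRHS1
end

section
/- Let L_i be the CIR generator (L_i f)(z) = (1/2)(α_i − β z) f'(z) + (1/2) z f''(z) with α_i, β > 0, and define h_i(z, m, s) = (Γ(α_i)/Γ(α_i+m)) ((β+s)/β)^{α_i} (β+s)^m z^m e^{−s z} for m ∈ Z_+, s ≥ 0, z > 0. Then (L_i h_i(·, m, s))(z) = (m/2)(β+s) h_i(z, m−1, s) + (s/2)(α_i+m) h_i(z, m+1, s) − (1/2)(s(α_i+m) + m(β+s)) h_i(z, m, s). -/
open Real

/-- The CIR duality function
`h(z,m,s) = (Γ(α)/Γ(α+m)) ((β+s)/β)^α (β+s)^m z^m e^{-sz}`. -/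
noncomputable def hCIR (α β : ℝ) (z : ℝ) (m : ℕ) (s : ℝ) : ℝ :=
  (Real.Gamma α / Real.Gamma (α + m)) * ((β + s) / β) ^ α *
    (β + s) ^ m * z ^ m * Real.exp (-s * z)

lemma hasDerivAt_expNeg (s w : ℝ) :
    HasDerivAt (fun w : ℝ => Real.exp (-s * w)) (-s * Real.exp (-s * w)) w := by
  have h : HasDerivAt (fun w : ℝ => -s * w) (-s) w := by
    simpa using (hasDerivAt_id w).const_mul (-s)
  simpa [mul_comm] using h.exp

lemma hasDerivAt_g (m : ℕ) (s w : ℝ) :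
    HasDerivAt (fun w : ℝ => w ^ m * Real.exp (-s * w))
      (((m : ℝ) * w ^ (m - 1) - s * w ^ m) * Real.exp (-s * w)) w := by
  have h : HasDerivAt (fun w : ℝ => w ^ m * Real.exp (-s * w))
      ((m : ℝ) * w ^ (m - 1) * Real.exp (-s * w) + w ^ m * (-s * Real.exp (-s * w))) w :=
    (hasDerivAt_pow m w).mul (hasDerivAt_expNeg s w)
  convert h using 1
  ring

lemma hasDerivAt_g' (m : ℕ) (s w : ℝ) :
    HasDerivAt (fun w : ℝ => ((m : ℝ) * w ^ (m - 1) - s * w ^ m) * Real.exp (-s * w))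
      ((((m : ℝ) * (((m - 1 : ℕ) : ℝ) * w ^ (m - 1 - 1)) - s * (m * w ^ (m - 1))) *
          Real.exp (-s * w) +
        ((m : ℝ) * w ^ (m - 1) - s * w ^ m) * (-s * Real.exp (-s * w)))) w := by
  exact (((hasDerivAt_pow (m - 1) w).const_mul (m : ℝ)).sub
    ((hasDerivAt_pow m w).const_mul s)).mul (hasDerivAt_expNeg s w)

lemma deriv_hCIR (α β : ℝ) (m : ℕ) (s : ℝ) :
    deriv (fun w => hCIR α β w m s) = fun w =>
      (Real.Gamma α / Real.Gamma (α + m)) * ((β + s) / β) ^ α * (β + s) ^ m *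
        (((m : ℝ) * w ^ (m - 1) - s * w ^ m) * Real.exp (-s * w)) := by
  funext w
  have h := (hasDerivAt_g m s w).const_mul
    ((Real.Gamma α / Real.Gamma (α + m)) * ((β + s) / β) ^ α * (β + s) ^ m)
  have h' : HasDerivAt (fun w => hCIR α β w m s)
      ((Real.Gamma α / Real.Gamma (α + m)) * ((β + s) / β) ^ α * (β + s) ^ m *
        (((m : ℝ) * w ^ (m - 1) - s * w ^ m) * Real.exp (-s * w))) w := by
    simpa [hCIR, mul_assoc] using h
  exact h'.deriv

set_option maxHeartbeats 1600000 in
/-- the CIR generator applied to `h(·,m,s)` satisfies the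
duality identity. -/
theorem CIR_generator_duality (α β : ℝ) (hα : 0 < α) (hβ : 0 < β)
    (m : ℕ) (s : ℝ) (hs : 0 ≤ s) (z : ℝ) (hz : 0 < z) :
    (1 / 2) * (α - β * z) * deriv (fun w => hCIR α β w m s) z
      + (1 / 2) * z * deriv (deriv (fun w => hCIR α β w m s)) z
    = (m / 2) * (β + s) * hCIR α β z (m - 1) s
      + (s / 2) * (α + m) * hCIR α β z (m + 1) s
      - (1 / 2) * (s * (α + m) + m * (β + s)) * hCIR α β z m s := by
  rw [deriv_hCIR]
  have h2 : deriv (fun w =>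
      (Real.Gamma α / Real.Gamma (α + m)) * ((β + s) / β) ^ α * (β + s) ^ m *
        (((m : ℝ) * w ^ (m - 1) - s * w ^ m) * Real.exp (-s * w))) z
      = (Real.Gamma α / Real.Gamma (α + m)) * ((β + s) / β) ^ α * (β + s) ^ m *
        ((((m : ℝ) * (((m - 1 : ℕ) : ℝ) * z ^ (m - 1 - 1)) - s * (m * z ^ (m - 1))) *
          Real.exp (-s * z) +
        ((m : ℝ) * z ^ (m - 1) - s * z ^ m) * (-s * Real.exp (-s * z)))) :=
    ((hasDerivAt_g' m s z).const_mul _).deriv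
  rw [h2]
  have hexp : Real.exp (-s * z) ≠ 0 := Real.exp_ne_zero _
  have hβ' : β ≠ 0 := ne_of_gt hβ
  have hz' : z ≠ 0 := ne_of_gt hz
  have hGα : Real.Gamma α ≠ 0 := ne_of_gt (Real.Gamma_pos_of_pos hα)
  match m with
  | 0 =>
    have hG1 : Real.Gamma (α + 1) = α * Real.Gamma α :=
      Real.Gamma_add_one (ne_of_gt hα)
    simp only [hCIR]
    norm_num
    rw [hG1]
    field_simp
    ring
  | 1 =>
    have hG1 : Real.Gamma (α + 1) = α * Real.Gamma α :=
      Real.Gamma_add_one (ne_of_gt hα)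
    have hG2 : Real.Gamma (α + 2) = (α + 1) * Real.Gamma (α + 1) := by
      rw [show α + 2 = (α + 1) + 1 by ring, Real.Gamma_add_one (by positivity)]
    have hG1' : Real.Gamma (α + 1) ≠ 0 :=
      ne_of_gt (Real.Gamma_pos_of_pos (by positivity))
    simp only [hCIR]
    norm_num
    rw [hG2, hG1]
    field_simp
    ring
  | (k + 2) =>
    have hGk : Real.Gamma (α + k) ≠ 0 :=
      ne_of_gt (Real.Gamma_pos_of_pos (by positivity))
    have e1 : Real.Gamma (α + ((k : ℝ) + 1)) = (α + k) * Real.Gamma (α + k) := by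
      rw [show α + ((k : ℝ) + 1) = (α + k) + 1 by ring,
        Real.Gamma_add_one (by positivity)]
    have e2 : Real.Gamma (α + ((k : ℝ) + 2))
        = (α + k + 1) * ((α + k) * Real.Gamma (α + k)) := by
      rw [show α + ((k : ℝ) + 2) = (α + ((k : ℝ) + 1)) + 1 by ring,
        Real.Gamma_add_one (by positivity), e1]
      ring_nf
    have e3 : Real.Gamma (α + ((k : ℝ) + 2 + 1))
        = (α + k + 2) * ((α + k + 1) * ((α + k) * Real.Gamma (α + k))) := by
      rw [show α + ((k : ℝ) + 2 + 1) = (α + ((k : ℝ) + 2)) + 1 by ring,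
        Real.Gamma_add_one (by positivity), e2]
      ring_nf
    have hαk : α + (k : ℝ) ≠ 0 := by positivity
    have hαk1 : α + (k : ℝ) + 1 ≠ 0 := by positivity
    have hαk2 : α + (k : ℝ) + 2 ≠ 0 := by positivity
    simp only [hCIR, Nat.add_sub_cancel, show k + 2 - 1 = k + 1 from rfl,
      show k + 1 - 1 = k from rfl]
    push_cast
    rw [e1, e2, e3]
    field_simp
    ring
end
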